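/- Let G be a graph, let P be a longest path in G with extremes p_1 and p_2, let q be a vertex of G not on P, and let R be a path from q to a vertex v of P such that no vertex of R other than v lies on P. Then dist_P(p_1, v) ≥ |R| and dist_P(v, p_2) ≥ |R|, where |R| denotes the length of R. -/

import Mathlib

open SimpleGraph Walk

lemma path_append {V : Type*} {G : SimpleGraph V} {a b c : V}
    (p : G.Walk a b) (q : G.Walk b c) (hp : p.IsPath) (hq : q.IsPath)
    (h : ∀ x, x ∈ p.support → x ∈ q.support → x = b) : (p.append q).IsPath := by
  rw [Walk.isPath_def, Walk.support_append, List.nodup_append]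
  refine ⟨hp.support_nodup, hq.support_nodup.tail, ?_⟩
  intro x hx y hx' hxy
  subst hxy
  have hxq : x ∈ q.support := List.mem_of_mem_tail hx'
  have hxb := h x hx hxq
  subst hxb
  have := hq.support_nodup
  rw [q.support_eq_cons] at this
  exact (List.nodup_cons.mp this).1 hx'

/-- Let `P` be a longest path in `G` with extremes `p₁` and `p₂`, let `q` be
a vertex not on `P`, and let `R` be a path from `q` to a vertex `v` of `P` such that no
vertex of `R` other than `v` lies on `P`. Then `dist_P(p₁, v) ≥ |R|` and
`dist_P(v, p₂) ≥ |R|`.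

Here `dist_P(p₁, v)` is the length of `P.takeUntil v` (the subpath of `P` from `p₁` to
`v`) and `dist_P(v, p₂)` is the length of `P.dropUntil v` (the subpath from `v` to `p₂`). -/
theorem stmt_12 {V : Type*} [DecidableEq V] {G : SimpleGraph V}
    {p₁ p₂ : V} (P : G.Walk p₁ p₂) (hP : P.IsPath)
    (hmax : ∀ (a b : V) (W : G.Walk a b), W.IsPath → W.length ≤ P.length)
    {q v : V} (hq : q ∉ P.support) (hv : v ∈ P.support)
    (R : G.Walk q v) (hR : R.IsPath)
    (hRint : ∀ x ∈ R.support, x ≠ v → x ∉ P.support) :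
    R.length ≤ (P.takeUntil v hv).length ∧ R.length ≤ (P.dropUntil v hv).length := by
  have hsum : (P.takeUntil v hv).length + (P.dropUntil v hv).length = P.length := by
    rw [← Walk.length_append, Walk.take_spec]
  have htake : (P.takeUntil v hv).IsPath := hP.takeUntil hv
  have hdrop : (P.dropUntil v hv).IsPath := hP.dropUntil hv
  have key : ∀ x ∈ R.support, x ∈ P.support → x = v := by
    intro x hx hxP
    by_contra hne
    exact hRint x hx hne hxP
  constructor
  · -- R.append (P.dropUntil v hv) is a path from q to p₂
    have h1 : (R.append (P.dropUntil v hv)).IsPath :=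
      path_append _ _ hR hdrop fun x hx hx' =>
        key x hx (Walk.support_dropUntil_subset P hv hx')
    have := hmax _ _ _ h1
    rw [Walk.length_append] at this
    omega
  · -- R.append (P.takeUntil v hv).reverse is a path from q to p₁
    have h1 : (R.append (P.takeUntil v hv).reverse).IsPath :=
      path_append _ _ hR htake.reverse fun x hx hx' => by
        rw [Walk.support_reverse, List.mem_reverse] at hx'
        exact key x hx (Walk.support_takeUntil_subset P hv hx')
    have := hmax _ _ _ h1
    rw [Walk.length_append, Walk.length_reverse] at this
    omega
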